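/- In the rejection scheme in which θ ~ π, X | θ ~ f(·|θ), U ~ Uniform[0,1] independently, and θ is accepted if and only if U ≤ π_ε(D − X)/c, and assuming the normalising constant Z := ∫ π(θ') ∫ π_ε(D − x) f(x|θ') dx dθ' is positive and finite, the conditional distribution of θ given acceptance has density θ ↦ π(θ) ∫ π_ε(D − x) f(x|θ) dx / Z with respect to Lebesgue measure on Θ. -/

import Mathlib

open MeasureTheory ProbabilityTheory

/-- In the ABC rejection scheme (θ ~ π, X | θ ~ f(·|θ), U ~ Uniform[0,1]
independent, accept iff U ≤ π_ε(D − X)/c), provided the normalising constant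
Z = ∫ π(θ') ∫ π_ε(D − x) f(x|θ') dx dθ' is positive and finite, the conditional distribution
of θ given acceptance has density θ ↦ π(θ) ∫ π_ε(D − x) f(x|θ) dx / Z w.r.t. Lebesgue measure. -/
theorem abc_rejection_conditional_density (p d : ℕ)
    (π : (Fin p → ℝ) → ℝ) (f : (Fin p → ℝ) → (Fin d → ℝ) → ℝ)
    (πε : (Fin d → ℝ) → ℝ) (D : Fin d → ℝ) (c : ℝ)
    (hπ_meas : Measurable π) (hπ_nonneg : ∀ θ, 0 ≤ π θ) (hπ_int : ∫ θ, π θ = 1)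
    (hf_meas : Measurable (Function.uncurry f)) (hf_nonneg : ∀ θ x, 0 ≤ f θ x)
    (hf_int : ∀ θ, ∫ x, f θ x = 1)
    (hε_meas : Measurable πε) (hε_nonneg : ∀ r, 0 ≤ πε r) (hε_int : ∫ r, πε r = 1)
    (hc : 0 < c) (hεc : ∀ r, πε r ≤ c)
    (hZ_pos : 0 < ∫ θ, π θ * ∫ x, πε (D - x) * f θ x)
    (hZ_fin : Integrable (fun θ => π θ * ∫ x, πε (D - x) * f θ x)) :
    Measure.map (fun ω : ((Fin p → ℝ) × (Fin d → ℝ)) × ℝ => ω.1.1)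
      (ProbabilityTheory.cond
        ((((volume : Measure ((Fin p → ℝ) × (Fin d → ℝ))).withDensity
            (fun q => ENNReal.ofReal (π q.1 * f q.1 q.2))).prod
          ((volume : Measure ℝ).restrict (Set.Icc 0 1))))
        {ω : ((Fin p → ℝ) × (Fin d → ℝ)) × ℝ | ω.2 ≤ πε (D - ω.1.2) / c})
    = (volume : Measure (Fin p → ℝ)).withDensity
        (fun θ => ENNReal.ofReal (π θ * (∫ x, πε (D - x) * f θ x) /
          (∫ θ', π θ' * ∫ x, πε (D - x) * f θ' x))) := by
  set g : (Fin p → ℝ) → ℝ := fun θ => ∫ x, πε (D - x) * f θ x with hg_def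
  set Z : ℝ := ∫ θ, π θ * g θ with hZ_def
  set μ : Measure ((Fin p → ℝ) × (Fin d → ℝ)) :=
    (volume : Measure ((Fin p → ℝ) × (Fin d → ℝ))).withDensity
      (fun q => ENNReal.ofReal (π q.1 * f q.1 q.2)) with hμ_def
  set ν : Measure ℝ := (volume : Measure ℝ).restrict (Set.Icc 0 1) with hν_def
  set A : Set (((Fin p → ℝ) × (Fin d → ℝ)) × ℝ) :=
    {ω | ω.2 ≤ πε (D - ω.1.2) / c} with hA_def
  -- basic measurability facts
  have hεx_meas : Measurable (fun x : Fin d → ℝ => πε (D - x)) :=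
    hε_meas.comp (measurable_const.sub measurable_id)
  have hfθ_meas : ∀ θ, Measurable (f θ) := fun θ =>
    hf_meas.comp measurable_prodMk_left
  have hA_meas : MeasurableSet A := by
    apply measurableSet_le measurable_snd
    exact ((hεx_meas.comp (measurable_fst.snd))).div_const c
  have hproj_meas : Measurable (fun ω : ((Fin p → ℝ) × (Fin d → ℝ)) × ℝ => ω.1.1) :=
    measurable_fst.fst
  -- integrability facts
  have hfθ_int : ∀ θ, Integrable (f θ) := fun θ =>
    integrable_of_integral_eq_one (hf_int θ)
  have hfg_int : ∀ θ, Integrable (fun x => πε (D - x) * f θ x) := by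
    intro θ
    refine (hfθ_int θ).bdd_mul (c := c) (hεx_meas.aestronglyMeasurable) (Filter.Eventually.of_forall fun x => ?_)
    rw [Real.norm_eq_abs, abs_of_nonneg (hε_nonneg _)]
    exact hεc _
  have hg_nonneg : ∀ θ, 0 ≤ g θ := fun θ =>
    integral_nonneg fun x => mul_nonneg (hε_nonneg _) (hf_nonneg _ _)
  -- the inner lintegral computation
  have inner : ∀ θ, (∫⁻ x, ENNReal.ofReal (π θ * f θ x) *
      ENNReal.ofReal (πε (D - x) / c)) = ENNReal.ofReal (π θ * g θ / c) := by
    intro θ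
    have step : ∀ x, ENNReal.ofReal (π θ * f θ x) * ENNReal.ofReal (πε (D - x) / c)
        = ENNReal.ofReal (π θ / c) * ENNReal.ofReal (πε (D - x) * f θ x) := by
      intro x
      rw [← ENNReal.ofReal_mul (mul_nonneg (hπ_nonneg θ) (hf_nonneg θ x)),
        ← ENNReal.ofReal_mul (div_nonneg (hπ_nonneg θ) hc.le)]
      congr 1
      field_simp
    simp_rw [step]
    rw [lintegral_const_mul _ (f := fun x => ENNReal.ofReal (πε (D - x) * f θ x)) ((hεx_meas.mul (hfθ_meas θ)).ennreal_ofReal),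
      ← ofReal_integral_eq_lintegral_ofReal (hfg_int θ)
        (Filter.Eventually.of_forall fun x => mul_nonneg (hε_nonneg _) (hf_nonneg _ _)),
      ← ENNReal.ofReal_mul (div_nonneg (hπ_nonneg θ) hc.le)]
    congr 1
    rw [hg_def]
    ring
  -- the key computation
  have key : ∀ S : Set (Fin p → ℝ), MeasurableSet S →
      (μ.prod ν) (A ∩ (fun ω : ((Fin p → ℝ) × (Fin d → ℝ)) × ℝ => ω.1.1) ⁻¹' S)
        = ∫⁻ θ in S, ENNReal.ofReal (π θ * g θ / c) := by
    intro S hS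
    have hT : MeasurableSet (A ∩ (fun ω : ((Fin p → ℝ) × (Fin d → ℝ)) × ℝ => ω.1.1) ⁻¹' S) :=
      hA_meas.inter (hproj_meas hS)
    rw [Measure.prod_apply hT]
    have hslice : ∀ z : (Fin p → ℝ) × (Fin d → ℝ),
        ν (Prod.mk z ⁻¹' (A ∩ (fun ω : ((Fin p → ℝ) × (Fin d → ℝ)) × ℝ => ω.1.1) ⁻¹' S))
          = ENNReal.ofReal (πε (D - z.2) / c) * S.indicator 1 z.1 := by
      intro z
      by_cases hz : z.1 ∈ S
      · have hpre : Prod.mk z ⁻¹' (A ∩ (fun ω : ((Fin p → ℝ) × (Fin d → ℝ)) × ℝ => ω.1.1) ⁻¹' S)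
            = Set.Iic (πε (D - z.2) / c) := by
          ext u
          simp [hA_def, hz, Set.mem_Iic]
        have ht0 : (0 : ℝ) ≤ πε (D - z.2) / c := div_nonneg (hε_nonneg _) hc.le
        have ht1 : πε (D - z.2) / c ≤ 1 := (div_le_one hc).mpr (hεc _)
        rw [hpre, hν_def, Measure.restrict_apply measurableSet_Iic]
        have hinter : Set.Iic (πε (D - z.2) / c) ∩ Set.Icc 0 1
            = Set.Icc 0 (πε (D - z.2) / c) := by
          ext u
          simp only [Set.mem_inter_iff, Set.mem_Iic, Set.mem_Icc]
          constructor
          · rintro ⟨h1, h2, _⟩; exact ⟨h2, h1⟩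
          · rintro ⟨h1, h2⟩; exact ⟨h2, h1, h2.trans ht1⟩
        rw [hinter, Real.volume_Icc, Set.indicator_of_mem hz, Pi.one_apply, mul_one,
          sub_zero]
      · have hpre : Prod.mk z ⁻¹' (A ∩ (fun ω : ((Fin p → ℝ) × (Fin d → ℝ)) × ℝ => ω.1.1) ⁻¹' S)
            = ∅ := by
          ext u
          simp [hA_def, hz]
        rw [hpre, Set.indicator_of_notMem hz, mul_zero, measure_empty]
    simp_rw [hslice]
    have hF : Measurable (fun q : (Fin p → ℝ) × (Fin d → ℝ) =>
        ENNReal.ofReal (π q.1 * f q.1 q.2)) := by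
      apply Measurable.ennreal_ofReal
      exact (hπ_meas.comp measurable_fst).mul hf_meas
    have hG : Measurable (fun z : (Fin p → ℝ) × (Fin d → ℝ) =>
        ENNReal.ofReal (πε (D - z.2) / c) * S.indicator 1 z.1) := by
      apply Measurable.mul
      · exact ((hεx_meas.comp measurable_snd).div_const c).ennreal_ofReal
      · exact (measurable_one.indicator hS).comp measurable_fst
    rw [hμ_def, lintegral_withDensity_eq_lintegral_mul _ hF hG]
    simp only [Pi.mul_apply]
    rw [MeasureTheory.Measure.volume_eq_prod]
    rw [lintegral_prod (fun a => ENNReal.ofReal (π a.1 * f a.1 a.2) * (ENNReal.ofReal (πε (D - a.2) / c) * S.indicator 1 a.1)) (hF.mul hG).aemeasurable]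
    have point : ∀ θ, (∫⁻ x, ENNReal.ofReal (π θ * f θ x) *
        (ENNReal.ofReal (πε (D - x) / c) * S.indicator 1 θ))
        = S.indicator (fun θ' => ENNReal.ofReal (π θ' * g θ' / c)) θ := by
      intro θ
      by_cases hθ : θ ∈ S
      · rw [Set.indicator_of_mem hθ]
        simp only [Set.indicator_of_mem hθ, Pi.one_apply, mul_one]
        exact inner θ
      · rw [Set.indicator_of_notMem hθ]
        simp only [Set.indicator_of_notMem hθ, mul_zero]
        exact lintegral_zero
    simp_rw [point]
    exact lintegral_indicator hS _
  -- value of P A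
  have hA_val : (μ.prod ν) A = ENNReal.ofReal (Z / c) := by
    have := key Set.univ MeasurableSet.univ
    simp only [Set.preimage_univ, Set.inter_univ, Measure.restrict_univ] at this
    rw [this, ← ofReal_integral_eq_lintegral_ofReal (hZ_fin.div_const c)
      (Filter.Eventually.of_forall fun θ =>
        div_nonneg (mul_nonneg (hπ_nonneg θ) (hg_nonneg θ)) hc.le)]
    congr 1
    rw [hZ_def, ← integral_div]
  have hZc_pos : (0 : ℝ) < Z / c := div_pos hZ_pos hc
  -- conclude by extensionality
  ext s hs
  rw [Measure.map_apply hproj_meas hs, ProbabilityTheory.cond_apply hA_meas,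
    key s hs, hA_val, withDensity_apply _ hs]
  have point2 : ∀ θ : Fin p → ℝ, ENNReal.ofReal (π θ * g θ / c)
      = ENNReal.ofReal (Z / c) * ENNReal.ofReal (π θ * g θ / Z) := by
    intro θ
    rw [← ENNReal.ofReal_mul hZc_pos.le]
    congr 1
    field_simp
  simp_rw [point2]
  rw [lintegral_const_mul _ (f := fun θ => ENNReal.ofReal (π θ * g θ / Z)) (((hπ_meas.mul (by
      have : Measurable fun z : (Fin p → ℝ) × (Fin d → ℝ) => πε (D - z.2) * f z.1 z.2 :=
        (hεx_meas.comp measurable_snd).mul hf_meas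
      exact this.stronglyMeasurable.integral_prod_right'.measurable)).div_const Z).ennreal_ofReal),
    ← mul_assoc, ENNReal.inv_mul_cancel (by positivity) ENNReal.ofReal_ne_top, one_mul]
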